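/- Let m ≥ 1 and r, t ∈ ℂ. For every n ≥ 1 and every tuple (a_1,…,a_n) ∈ (Fin m)^n, the operator product P_{a_1}·G_{r,t} · P_{a_2}·G_{r,t} ⋯ P_{a_n}·G_{r,t} equals Ξ(a_1,…,a_n) · ((r − t)·|a_1⟩⟨a_n| + t·√m·|a_1⟩⟨s|), where Ξ(a_1,…,a_n) = ∏_{j=1}^{n−1} (t + (r − t)·δ_{a_j,a_{j+1}}) (the empty product for n = 1 is 1). -/

import Mathlib

noncomputable section

open scoped BigOperators

/-- The complex Euclidean space `ℂ^m`. -/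
abbrev H (m : ℕ) := EuclideanSpace ℂ (Fin m)

/-- The computational orthonormal basis vector `|a⟩`. -/
def ket {m : ℕ} (a : Fin m) : H m := EuclideanSpace.single a 1

/-- The uniform superposition `|s⟩ = (1/√m) Σ_a |a⟩`. -/
def ketS (m : ℕ) : H m := ((Real.sqrt m : ℂ))⁻¹ • ∑ a : Fin m, ket a

/-- The outer product `|x⟩⟨y|`, i.e. `v ↦ ⟪y, v⟫ • x`. -/
def outer {m : ℕ} (x y : H m) : H m →L[ℂ] H m := (innerSL ℂ y).smulRight x

/-- The projection `P_a = |a⟩⟨a|`. -/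
def P {m : ℕ} (a : Fin m) : H m →L[ℂ] H m := outer (ket a) (ket a)

/-- The generalized Grover coin `G_{r,t} = (r - t)·I + t·m·|s⟩⟨s|`. -/
def grover (m : ℕ) (r t : ℂ) : H m →L[ℂ] H m :=
  (r - t) • 1 + (t * m) • outer (ketS m) (ketS m)

/-- `Ξ(a_1, …, a_n) = ∏_{j=1}^{n-1} (t + (r - t) δ_{a_j, a_{j+1}})` (empty product is 1). -/
def Xi (m n : ℕ) (r t : ℂ) (a : Fin n → Fin m) : ℂ :=
  ∏ j : Fin n, if h : (j : ℕ) + 1 < n then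
    (t + (r - t) * (if a j = a ⟨(j : ℕ) + 1, h⟩ then 1 else 0)) else 1

lemma outer_apply {m : ℕ} (x y v : H m) : outer x y v = (inner ℂ y v : ℂ) • x := rfl

lemma outer_mul {m : ℕ} (x y u v : H m) :
    outer x y * outer u v = (inner ℂ y u : ℂ) • outer x v := by
  ext w
  simp only [ContinuousLinearMap.mul_apply, outer_apply, ContinuousLinearMap.smul_apply,
    inner_smul_right, smul_smul]
  ring_nf

lemma inner_ket_ket {m : ℕ} (a b : Fin m) :
    (inner ℂ (ket a) (ket b) : ℂ) = if a = b then 1 else 0 := by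
  simp [ket, EuclideanSpace.inner_single_left, EuclideanSpace.single_apply]

lemma inner_ketS_ket {m : ℕ} (b : Fin m) :
    (inner ℂ (ketS m) (ket b) : ℂ) = ((Real.sqrt m : ℂ))⁻¹ := by
  simp only [ketS, inner_smul_left, sum_inner, inner_ket_ket]
  simp [Complex.conj_inv]

lemma inner_ket_ketS {m : ℕ} (b : Fin m) :
    (inner ℂ (ket b) (ketS m) : ℂ) = ((Real.sqrt m : ℂ))⁻¹ := by
  simp only [ketS, inner_smul_right, inner_sum, inner_ket_ket]
  simp

lemma sqrt_mul_self' (m : ℕ) : (Real.sqrt m : ℂ) * (Real.sqrt m : ℂ) = (m : ℂ) := by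
  have := Real.mul_self_sqrt (show (0:ℝ) ≤ m by positivity)
  exact_mod_cast this

lemma sqrt_ne_zero' {m : ℕ} (hm : 1 ≤ m) : (Real.sqrt m : ℂ) ≠ 0 := by
  norm_cast
  positivity

lemma P_mul_grover {m : ℕ} (hm : 1 ≤ m) (r t : ℂ) (a : Fin m) :
    P a * grover m r t
      = (r - t) • outer (ket a) (ket a) + (t * (Real.sqrt m : ℂ)) • outer (ket a) (ketS m) := by
  have h : outer (ket a) (ket a) * outer (ketS m) (ketS m)
      = ((Real.sqrt m : ℂ))⁻¹ • outer (ket a) (ketS m) := by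
    rw [outer_mul, inner_ket_ketS]
  rw [P, grover, mul_add, mul_smul_comm, mul_smul_comm, mul_one, h, smul_smul]
  congr 2
  rw [← sqrt_mul_self' m]
  field_simp [sqrt_ne_zero' hm]

lemma Xi_succ (m n : ℕ) (hn : 1 ≤ n) (r t : ℂ) (a : Fin (n+1) → Fin m) :
    Xi m (n+1) r t a
      = (t + (r - t) * (if a ⟨0, by omega⟩ = a ⟨1, by omega⟩ then 1 else 0))
        * Xi m n r t (a ∘ Fin.succ) := by
  rw [Xi, Fin.prod_univ_succ]
  congr 1
  · rw [dif_pos (by simp only [Fin.val_zero]; omega : (((0 : Fin (n+1)) : ℕ)) + 1 < n + 1)]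
    norm_num
    split_ifs <;> simp_all
  · rw [Xi]
    apply Finset.prod_congr rfl
    intro j _
    by_cases h : (j : ℕ) + 1 < n
    · rw [dif_pos (by simp; omega : ((j.succ : ℕ)) + 1 < n + 1), dif_pos h]
      rfl
    · rw [dif_neg (by simp; omega), dif_neg h]


set_option maxHeartbeats 1000000 in
/-- For every tuple `(a_1, …, a_n)`,
`P_{a_1} G_{r,t} ⋯ P_{a_n} G_{r,t} = Ξ(a) ((r - t)|a_1⟩⟨a_n| + t√m |a_1⟩⟨s|)`. -/
theorem grover_general_proj_prod (m : ℕ) (hm : 1 ≤ m) (r t : ℂ)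
    (n : ℕ) (hn : 1 ≤ n) (a : Fin n → Fin m) :
    (List.ofFn (fun j : Fin n => P (a j) * grover m r t)).prod
      = Xi m n r t a •
          ((r - t) • outer (ket (a ⟨0, by omega⟩)) (ket (a ⟨n - 1, by omega⟩))
            + (t * (Real.sqrt m : ℂ)) • outer (ket (a ⟨0, by omega⟩)) (ketS m)) := by
  induction n, hn using Nat.le_induction with
  | base =>
    have hXi : Xi m 1 r t a = 1 := by simp [Xi]
    rw [hXi, one_smul]
    simp only [List.ofFn_succ, List.ofFn_zero, List.prod_cons, List.prod_nil, mul_one]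
    rw [P_mul_grover hm]
    rfl
  | succ n hn IH =>
    have IH' : (List.ofFn fun j : Fin n => P (a j.succ) * grover m r t).prod
        = Xi m n r t (a ∘ Fin.succ) •
            ((r - t) • outer (ket (a (Fin.succ ⟨0, by omega⟩))) (ket (a (Fin.succ ⟨n - 1, by omega⟩)))
              + (t * (Real.sqrt m : ℂ)) • outer (ket (a (Fin.succ ⟨0, by omega⟩))) (ketS m)) := by
      have h := IH (a ∘ Fin.succ)
      simp only [Function.comp_apply] at h
      exact h
    have h1 : (Fin.succ (⟨0, by omega⟩ : Fin n)) = (⟨1, by omega⟩ : Fin (n+1)) := by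
      ext; simp
    have h2 : (Fin.succ (⟨n - 1, by omega⟩ : Fin n)) = (⟨n + 1 - 1, by omega⟩ : Fin (n+1)) := by
      ext; simp; omega
    rw [h1, h2] at IH'
    rw [List.ofFn_succ, List.prod_cons]
    rw [IH', P_mul_grover hm, Xi_succ m n hn r t a]
    simp only [mul_smul_comm, mul_add, add_mul, smul_mul_assoc, outer_mul,
      inner_ket_ket, inner_ketS_ket, smul_smul, smul_add, Fin.mk_zero, Fin.mk_one]
    have hs : (Real.sqrt m : ℂ) ≠ 0 := sqrt_ne_zero' hm
    match_scalars <;> field_simp <;> split_ifs with h3 h4 <;> simp_all <;> ring
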